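/- For every NSB evacuation run on an initial loopless multigraph G(0) on n ≥ 2 vertices, the run terminates (i.e., the evacuation time T is finite) and satisfies 2·T ≤ 3·X′, where X′ is the minimum evacuation time of G(0); that is, the NSB algorithm has an approximation ratio no greater than 3/2 for the evacuation time. -/

import Mathlib

open scoped Classical

namespace NSBPaper

variable {V : Type} [Fintype V] [DecidableEq V]

/-- Degree of a vertex in a loopless multigraph given by multiplicity function `w`. -/
def deg (w : V → V → ℕ) (v : V) : ℕ := ∑ u, w v u

/-- Maximum degree of the multigraph. -/
def maxDeg (w : V → V → ℕ) : ℕ := Finset.univ.sup fun v => deg w v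

/-- The support simple graph of a multigraph: `u` and `v` are adjacent iff `u ≠ v`
and there is at least one multi-edge between them. -/
def support (w : V → V → ℕ) : SimpleGraph V where
  Adj u v := u ≠ v ∧ 1 ≤ w u v ∧ 1 ≤ w v u
  symm := ⟨fun u v h => ⟨h.1.symm, h.2.2, h.2.1⟩⟩
  loopless := ⟨fun v h => h.1 rfl⟩

/-- A set of unordered pairs `M` saturates a vertex `v` if some pair of `M` contains `v`. -/
def Saturates (M : Finset (Sym2 V)) (v : V) : Prop := ∃ e ∈ M, v ∈ e

/-- `M` is a matching of the multigraph `w`: its elements are non-loop edges of the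
support, and no two distinct elements share a vertex. -/
def IsMatching (w : V → V → ℕ) (M : Finset (Sym2 V)) : Prop :=
  (∀ e ∈ M, ¬ e.IsDiag) ∧
  (∀ u v : V, s(u, v) ∈ M → 1 ≤ w u v) ∧
  (∀ e ∈ M, ∀ f ∈ M, e ≠ f → ∀ x : V, x ∈ e → x ∉ f)

/-- `M` is a maximal matching of `w`: no pair can be added keeping it a matching. -/
def IsMaximalMatching (w : V → V → ℕ) (M : Finset (Sym2 V)) : Prop :=
  IsMatching w M ∧ ∀ e : Sym2 V, e ∉ M → ¬ IsMatching w (insert e M)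

/-- Removing a matching `M` from the multigraph `w`: the multiplicity of each pair in `M`
decreases by one. -/
def removeMatching (w : V → V → ℕ) (M : Finset (Sym2 V)) : V → V → ℕ :=
  fun u v => if s(u, v) ∈ M then w u v - 1 else w u v

/-- The subgraph of `G` induced by `Z` is bipartite: there is a set `A` such that every
edge of `G` inside `Z` joins `A` to its complement. -/
def BipartiteOn (G : SimpleGraph V) (Z : Set V) : Prop :=
  ∃ A : Set V, ∀ ⦃u v : V⦄, u ∈ Z → v ∈ Z → G.Adj u v → (u ∈ A ↔ v ∉ A)

/-- The edge multiset of `w` can be partitioned into `T` matchings. -/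
def CanEvacuate (w : V → V → ℕ) (T : ℕ) : Prop :=
  ∃ M : Fin T → Finset (Sym2 V),
    (∀ j, IsMatching w (M j)) ∧
    ∀ u v : V, (Finset.univ.filter fun j => s(u, v) ∈ M j).card = w u v

/-- The vertex-weight of a matching: the sum of the weights of its saturated vertices. -/
noncomputable def matchWeight (φ : V → ℕ) (M : Finset (Sym2 V)) : ℕ :=
  ∑ v : V, if Saturates M v then φ v else 0

/-- `Rfun M k i = 1` iff vertex `i` is saturated by the matching chosen in slot `k`. -/
noncomputable def Rfun (M : ℕ → Finset (Sym2 V)) (k : ℕ) (i : V) : ℕ :=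
  if Saturates (M k) i then 1 else 0

/-- `Ufun M k i` is `R i (k-1) * R i (k-2)` if `k ≡ 2 [MOD 3]` and `R i (k-1)` otherwise,
with `R i k = 0` for `k < 0`. -/
noncomputable def Ufun (M : ℕ → Finset (Sym2 V)) (k : ℕ) (i : V) : ℕ :=
  if k = 0 then 0
  else if k % 3 = 2 then Rfun M (k - 1) i * Rfun M (k - 2) i
  else Rfun M (k - 1) i

/-- Vertex `i` is heavy in `w`: `n * d(i) ≥ (n - 1) * Δ`. -/
def Heavy (w : V → V → ℕ) (i : V) : Prop :=
  (Fintype.card V - 1) * maxDeg w ≤ Fintype.card V * deg w i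

/-- Vertex `i` is critical in `w`: its degree is the maximum degree. -/
def Critical (w : V → V → ℕ) (i : V) : Prop := deg w i = maxDeg w

/-- The NSB weight of vertex `i`, where `u i` records whether `i` received enough
service previously. -/
noncomputable def nsbWeight (w : V → V → ℕ) (u : V → ℕ) (i : V) : ℕ :=
  if Heavy w i then deg w i * (2 - u i) else deg w i

/-- The LC-NSB weight of vertex `i`. -/
noncomputable def lcnsbWeight (w : V → V → ℕ) (u : V → ℕ) (i : V) : ℕ :=
  if Critical w i then 5 - 2 * u i
  else if Heavy w i then 4 - 2 * u i
  else 1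

/-- An NSB evacuation run on the initial multigraph `w0`: in each slot `k`, a matching
`M k` of `G k` maximizing the total NSB weight of saturated vertices is removed. -/
structure NSBRun (w0 : V → V → ℕ) where
  G : ℕ → V → V → ℕ
  M : ℕ → Finset (Sym2 V)
  init : G 0 = w0
  step : ∀ k, G (k + 1) = removeMatching (G k) (M k)
  matching : ∀ k, IsMatching (G k) (M k)
  opt : ∀ k, ∀ M' : Finset (Sym2 V), IsMatching (G k) M' →
    matchWeight (nsbWeight (G k) (Ufun M k)) M' ≤ matchWeight (nsbWeight (G k) (Ufun M k)) (M k)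

/-- An LC-NSB evacuation run on the initial multigraph `w0`. -/
structure LCNSBRun (w0 : V → V → ℕ) where
  G : ℕ → V → V → ℕ
  M : ℕ → Finset (Sym2 V)
  init : G 0 = w0
  step : ∀ k, G (k + 1) = removeMatching (G k) (M k)
  matching : ∀ k, IsMatching (G k) (M k)
  opt : ∀ k, ∀ M' : Finset (Sym2 V), IsMatching (G k) M' →
    matchWeight (lcnsbWeight (G k) (Ufun M k)) M' ≤
      matchWeight (lcnsbWeight (G k) (Ufun M k)) (M k)


section AuxMatching

set_option linter.unusedSectionVars false
set_option linter.unusedVariables false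

variable {V : Type} [Fintype V] [DecidableEq V]

lemma saturates_insert {M : Finset (Sym2 V)} {e : Sym2 V} {x : V} :
    Saturates (insert e M) x ↔ x ∈ e ∨ Saturates M x := by
  constructor
  · rintro ⟨f, hf, hx⟩
    rcases Finset.mem_insert.mp hf with rfl | hf
    · exact Or.inl hx
    · exact Or.inr ⟨f, hf, hx⟩
  · rintro (hx | ⟨f, hf, hx⟩)
    · exact ⟨e, Finset.mem_insert_self _ _, hx⟩
    · exact ⟨f, Finset.mem_insert_of_mem hf, hx⟩

lemma IsMatching.subset {w : V → V → ℕ} {M M' : Finset (Sym2 V)}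
    (h : IsMatching w M) (hsub : M' ⊆ M) : IsMatching w M' :=
  ⟨fun e he => h.1 e (hsub he), fun u v huv => h.2.1 u v (hsub huv),
   fun e he f hf hef x hxe => h.2.2 e (hsub he) f (hsub hf) hef x hxe⟩

lemma IsMatching.eq_of_shared {w : V → V → ℕ} {M : Finset (Sym2 V)}
    (h : IsMatching w M) {e f : Sym2 V} (he : e ∈ M) (hf : f ∈ M) {x : V}
    (hxe : x ∈ e) (hxf : x ∈ f) : e = f := by
  by_contra hne
  exact h.2.2 e he f hf hne x hxe hxf

lemma IsMatching.insert {w : V → V → ℕ} {M : Finset (Sym2 V)} {a b : V}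
    (h : IsMatching w M) (hab : a ≠ b) (hw1 : 1 ≤ w a b) (hw2 : 1 ≤ w b a)
    (hsa : ¬ Saturates M a) (hsb : ¬ Saturates M b) :
    IsMatching w (insert s(a, b) M) := by
  refine ⟨?_, ?_, ?_⟩
  · intro e he
    rcases Finset.mem_insert.mp he with rfl | he
    · simpa [Sym2.mk_isDiag_iff] using hab
    · exact h.1 e he
  · intro u v huv
    rcases Finset.mem_insert.mp huv with heq | huv
    · rcases Sym2.eq_iff.mp heq with ⟨rfl, rfl⟩ | ⟨rfl, rfl⟩
      · exact hw1
      · exact hw2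
    · exact h.2.1 u v huv
  · intro e he f hf hef x hxe hxf
    rcases Finset.mem_insert.mp he with rfl | he
    · rcases Finset.mem_insert.mp hf with hfe | hf
      · exact hef hfe.symm
      · rcases Sym2.mem_iff.mp hxe with h1 | h1
        · exact hsa (h1 ▸ ⟨f, hf, hxf⟩)
        · exact hsb (h1 ▸ ⟨f, hf, hxf⟩)
    · rcases Finset.mem_insert.mp hf with hfe | hf
      · subst hfe
        rcases Sym2.mem_iff.mp hxf with h1 | h1
        · exact hsa (h1 ▸ ⟨e, he, hxe⟩)
        · exact hsb (h1 ▸ ⟨e, he, hxe⟩)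
      · exact h.2.2 e he f hf hef x hxe hxf

/-- Get the partner of a saturated vertex. -/
lemma IsMatching.partner {w : V → V → ℕ} {M : Finset (Sym2 V)}
    (h : IsMatching w M) {v : V} (hv : Saturates M v) :
    ∃ y : V, y ≠ v ∧ s(v, y) ∈ M ∧ ∀ u : V, s(v, u) ∈ M → u = y := by
  obtain ⟨e, he, hve⟩ := hv
  obtain ⟨y, rfl⟩ := Sym2.mem_iff_exists.mp hve
  refine ⟨y, ?_, he, ?_⟩
  · intro hyv
    exact h.1 _ he (by simp [Sym2.mk_isDiag_iff, hyv])
  · intro u hu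
    have : s(v, u) = s(v, y) :=
      h.eq_of_shared hu he (Sym2.mem_mk_left v u) (Sym2.mem_mk_left v y)
    exact Sym2.congr_right.mp this

lemma matchWeight_mono {φ : V → ℕ} {M M' : Finset (Sym2 V)}
    (h : ∀ x, Saturates M x → Saturates M' x) :
    matchWeight φ M ≤ matchWeight φ M' := by
  unfold matchWeight
  refine Finset.sum_le_sum fun x _ => ?_
  by_cases hx : Saturates M x
  · simp [hx, h x hx]
  · simp [hx]

lemma matchWeight_gain {φ : V → ℕ} {M M' : Finset (Sym2 V)} {v : V}
    (hv : ¬ Saturates M v) (hmono : ∀ x, Saturates M x → Saturates M' x)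
    (hv' : Saturates M' v) :
    matchWeight φ M + φ v ≤ matchWeight φ M' := by
  unfold matchWeight
  rw [← Finset.sum_erase_add _ _ (Finset.mem_univ v),
      ← Finset.sum_erase_add _ _ (Finset.mem_univ v)]
  have h1 : ∑ x ∈ Finset.univ.erase v, (if Saturates M x then φ x else 0) ≤
      ∑ x ∈ Finset.univ.erase v, (if Saturates M' x then φ x else 0) := by
    refine Finset.sum_le_sum fun x _ => ?_
    by_cases hx : Saturates M x
    · simp [hx, hmono x hx]
    · simp [hx]
  simp only [hv, hv', if_true, if_false, if_neg, if_pos]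
  omega

lemma matchWeight_swap {φ : V → ℕ} {M M' : Finset (Sym2 V)} {v x0 : V}
    (hvx : v ≠ x0) (hv : ¬ Saturates M v)
    (hmono : ∀ x, Saturates M x → x ≠ x0 → Saturates M' x)
    (hv' : Saturates M' v) :
    matchWeight φ M + φ v ≤ matchWeight φ M' + φ x0 := by
  unfold matchWeight
  rw [← Finset.sum_erase_add _ _ (Finset.mem_univ v),
      ← Finset.sum_erase_add _ _ (Finset.mem_univ v)]
  have hx0 : x0 ∈ Finset.univ.erase v := by
    simp [Finset.mem_erase, Ne.symm hvx]
  rw [← Finset.sum_erase_add _ _ hx0, ← Finset.sum_erase_add _ _ hx0]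
  have h1 : ∑ x ∈ (Finset.univ.erase v).erase x0, (if Saturates M x then φ x else 0) ≤
      ∑ x ∈ (Finset.univ.erase v).erase x0, (if Saturates M' x then φ x else 0) := by
    refine Finset.sum_le_sum fun x hx => ?_
    have hxx0 : x ≠ x0 := (Finset.mem_erase.mp hx).1
    by_cases hxM : Saturates M x
    · simp [hxM, hmono x hxM hxx0]
    · simp [hxM]
  have h2 : (if Saturates M x0 then φ x0 else 0) ≤ φ x0 := by split <;> omega
  simp only [hv, hv', if_true, if_false, if_neg, if_pos]
  omega

/-- Key exchange lemma for vertex-weighted matchings. -/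
lemma exchange {w : V → V → ℕ} :
    ∀ (n : ℕ) (M N : Finset (Sym2 V)), IsMatching w M → IsMatching w N →
    (N \ M).card ≤ n → ∀ v : V, Saturates N v → ¬ Saturates M v →
    ∃ M' : Finset (Sym2 V), IsMatching w M' ∧
      (((∀ x, Saturates M x → Saturates M' x) ∧ Saturates M' v) ∨
       (∃ x0, Saturates M x0 ∧ ¬ Saturates N x0 ∧
         (∀ x, Saturates M x → x ≠ x0 → Saturates M' x) ∧ Saturates M' v)) := by
  intro n
  induction n with
  | zero =>
    intro M N hM hN hcard v hvN hvM
    obtain ⟨y, hyv, hvy, _⟩ := hN.partner hvN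
    have hmem : s(v, y) ∈ N \ M :=
      Finset.mem_sdiff.mpr ⟨hvy, fun hmem => hvM ⟨_, hmem, Sym2.mem_mk_left v y⟩⟩
    have : 0 < (N \ M).card := Finset.card_pos.mpr ⟨_, hmem⟩
    omega
  | succ n ih =>
    intro M N hM hN hcard v hvN hvM
    obtain ⟨y, hyv, hvy, _⟩ := hN.partner hvN
    have hvyM : s(v, y) ∉ M := fun hmem => hvM ⟨_, hmem, Sym2.mem_mk_left v y⟩
    by_cases hyM : Saturates M y
    · -- y is saturated in M by edge s(y,z)
      obtain ⟨z, hzy, hyz, _⟩ := hM.partner hyM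
      have hzv : z ≠ v := fun h => hvM ⟨_, hyz, h ▸ Sym2.mem_mk_right y z⟩
      have hfM : s(y, z) ∈ M := hyz
      have herase : IsMatching w (M.erase s(y, z)) := hM.subset (Finset.erase_subset _ _)
      have hsatv : ¬ Saturates (M.erase s(y, z)) v := fun ⟨e, he, hve⟩ =>
        hvM ⟨e, Finset.mem_of_mem_erase he, hve⟩
      have hsaty : ¬ Saturates (M.erase s(y, z)) y := by
        rintro ⟨e, he, hye⟩
        have := hM.eq_of_shared (Finset.mem_of_mem_erase he) hfM hye (Sym2.mem_mk_left y z)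
        exact (Finset.mem_erase.mp he).1 this
      have hM1 : IsMatching w (insert s(v, y) (M.erase s(y, z))) :=
        herase.insert (Ne.symm hyv) (hN.2.1 v y hvy)
          (hN.2.1 y v (by rwa [Sym2.eq_swap])) hsatv hsaty
      set M1 := insert s(v, y) (M.erase s(y, z)) with hM1def
      have hsatM1 : ∀ x, Saturates M x → x ≠ z → Saturates M1 x := by
        intro x hx hxz
        obtain ⟨e, he, hxe⟩ := hx
        by_cases hef : e = s(y, z)
        · subst hef
          have hxy : x = y := by
            rcases Sym2.mem_iff.mp hxe with h | h
            · exact h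
            · exact absurd h hxz
          exact ⟨s(v, y), Finset.mem_insert_self _ _, by rw [hxy]; exact Sym2.mem_mk_right v y⟩
        · exact ⟨e, Finset.mem_insert_of_mem (Finset.mem_erase.mpr ⟨hef, he⟩), hxe⟩
      have hsatM1v : Saturates M1 v := ⟨s(v, y), Finset.mem_insert_self _ _, Sym2.mem_mk_left v y⟩
      have hsatM1z : ¬ Saturates M1 z := by
        rintro ⟨e, he, hze⟩
        rcases Finset.mem_insert.mp he with rfl | he
        · rcases Sym2.mem_iff.mp hze with h | h
          · exact hzv h
          · exact hzy h
        · have := hM.eq_of_shared (Finset.mem_of_mem_erase he) hfM hze (Sym2.mem_mk_right y z)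
          exact (Finset.mem_erase.mp he).1 this
      have hzM : Saturates M z := ⟨_, hfM, Sym2.mem_mk_right y z⟩
      by_cases hzN : Saturates N z
      · -- recurse
        have hcard' : (N \ M1).card ≤ n := by
          have hsub : N \ M1 ⊆ (N \ M).erase s(v, y) := by
            intro g hg
            obtain ⟨hgN, hgM1⟩ := Finset.mem_sdiff.mp hg
            have hgne : g ≠ s(v, y) := fun h => hgM1 (h ▸ Finset.mem_insert_self _ _)
            refine Finset.mem_erase.mpr ⟨hgne, Finset.mem_sdiff.mpr ⟨hgN, fun hgM => ?_⟩⟩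
            have hgnf : g ≠ s(y, z) := by
              rintro rfl
              have := hN.eq_of_shared hgN hvy (Sym2.mem_mk_left y z) (Sym2.mem_mk_right v y)
              rcases Sym2.eq_iff.mp this with ⟨h1, _⟩ | ⟨_, h2⟩
              · exact hyv h1
              · exact hzv h2
            exact hgM1 (Finset.mem_insert_of_mem (Finset.mem_erase.mpr ⟨hgnf, hgM⟩))
          have hvyNM : s(v, y) ∈ N \ M := Finset.mem_sdiff.mpr ⟨hvy, hvyM⟩
          calc (N \ M1).card ≤ ((N \ M).erase s(v, y)).card := Finset.card_le_card hsub
            _ = (N \ M).card - 1 := Finset.card_erase_of_mem hvyNM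
            _ ≤ n := by omega
        obtain ⟨M2, hM2, hcases⟩ := ih M1 N hM1 hN hcard' z hzN hsatM1z
        rcases hcases with ⟨hmono2, hz2⟩ | ⟨x', hx'M1, hx'N, hmono2, hz2⟩
        · refine ⟨M2, hM2, Or.inl ⟨?_, hmono2 v hsatM1v⟩⟩
          intro x hx
          by_cases hxz : x = z
          · exact hxz ▸ hz2
          · exact hmono2 x (hsatM1 x hx hxz)
        · have hx'v : x' ≠ v := fun h => hx'N (h ▸ hvN)
          have hx'y : x' ≠ y := fun h => hx'N (h ▸ ⟨_, hvy, Sym2.mem_mk_right v y⟩)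
          have hx'M : Saturates M x' := by
            obtain ⟨e, he, hx'e⟩ := hx'M1
            rcases Finset.mem_insert.mp he with rfl | he
            · rcases Sym2.mem_iff.mp hx'e with h | h
              · exact absurd h hx'v
              · exact absurd h hx'y
            · exact ⟨e, Finset.mem_of_mem_erase he, hx'e⟩
          refine ⟨M2, hM2, Or.inr ⟨x', hx'M, hx'N, ?_, ?_⟩⟩
          · intro x hx hxx'
            by_cases hxz : x = z
            · exact hxz ▸ hz2
            · exact hmono2 x (hsatM1 x hx hxz) hxx'
          · exact hmono2 v hsatM1v (Ne.symm hx'v)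
      · exact ⟨M1, hM1, Or.inr ⟨z, hzM, hzN, hsatM1, hsatM1v⟩⟩
    · refine ⟨insert s(v, y) M, hM.insert (Ne.symm hyv) (hN.2.1 v y hvy)
        (hN.2.1 y v (by rwa [Sym2.eq_swap])) hvM hyM, Or.inl ⟨?_, ?_⟩⟩
      · intro x hx
        exact saturates_insert.mpr (Or.inr hx)
      · exact saturates_insert.mpr (Or.inl (Sym2.mem_mk_left v y))

end AuxMatching
section HallExistence

set_option linter.unusedSectionVars false
set_option linter.unusedVariables false

variable {V : Type} [Fintype V] [DecidableEq V]

/-- Given an injective choice of neighbours for each vertex of `Z`, where `Z` is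
properly 2-coloured by `c`, build a matching saturating `Z`. -/
lemma construct_saturating {w : V → V → ℕ} (hws : ∀ a b, w a b = w b a)
    (c : V → Prop) (h : V → V) :
    ∀ (n : ℕ) (Z : Finset V), Z.card ≤ n →
    (∀ z ∈ Z, h z ≠ z ∧ 1 ≤ w z (h z)) →
    (∀ z ∈ Z, ∀ z' ∈ Z, h z = h z' → z = z') →
    (∀ z ∈ Z, ∀ z' ∈ Z, z ≠ z' → 1 ≤ w z z' → ¬(c z ↔ c z')) →
    ∃ N : Finset (Sym2 V), IsMatching w N ∧ (∀ z ∈ Z, Saturates N z) ∧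
      (∀ x, Saturates N x → x ∈ Z ∨ ∃ z ∈ Z, h z = x) := by
  intro n
  induction n with
  | zero =>
    intro Z hcard _ _ _
    have hZ : Z = ∅ := Finset.card_eq_zero.mp (Nat.le_zero.mp hcard)
    subst hZ
    refine ⟨∅, ⟨by simp, by simp, by simp⟩, by simp, ?_⟩
    rintro x ⟨e, he, _⟩
    simp at he
  | succ n ih =>
    intro Z hcard hadj hinj hcls
    by_cases hsrc : ∃ z0 ∈ Z, ∀ z ∈ Z, h z ≠ z0
    · obtain ⟨z0, hz0Z, hz0src⟩ := hsrc
      have hz0adj := hadj z0 hz0Z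
      by_cases hin : h z0 ∈ Z
      · -- pair z0 with h z0 ∈ Z
        set Z'' := (Z.erase z0).erase (h z0) with hZ''
        have hsub'' : Z'' ⊆ Z := fun x hx =>
          Finset.mem_of_mem_erase (Finset.mem_of_mem_erase hx)
        have hcard'' : Z''.card ≤ n := by
          have h1 : (Z.erase z0).card = Z.card - 1 := Finset.card_erase_of_mem hz0Z
          have h2 : Z''.card ≤ (Z.erase z0).card := Finset.card_erase_le
          omega
        obtain ⟨N'', hN'', hsat'', hvert''⟩ := ih Z'' hcard''
          (fun z hz => hadj z (hsub'' hz))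
          (fun z hz z' hz' => hinj z (hsub'' hz) z' (hsub'' hz'))
          (fun z hz z' hz' => hcls z (hsub'' hz) z' (hsub'' hz'))
        have hnz0 : ¬ Saturates N'' z0 := by
          intro hs
          rcases hvert'' z0 hs with hmem | ⟨z, hz, hzeq⟩
          · exact (Finset.mem_erase.mp (Finset.mem_of_mem_erase hmem)).1 rfl
          · exact hz0src z (hsub'' hz) hzeq
        have hnh : ¬ Saturates N'' (h z0) := by
          intro hs
          rcases hvert'' (h z0) hs with hmem | ⟨z, hz, hzeq⟩
          · exact (Finset.mem_erase.mp hmem).1 rfl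
          · have := hinj z (hsub'' hz) z0 hz0Z hzeq
            exact (Finset.mem_erase.mp (Finset.mem_of_mem_erase hz)).1 this
        refine ⟨insert s(z0, h z0) N'',
          hN''.insert (Ne.symm hz0adj.1) hz0adj.2 (by rw [hws]; exact hz0adj.2) hnz0 hnh,
          ?_, ?_⟩
        · intro z hz
          by_cases h1 : z = z0
          · exact saturates_insert.mpr (Or.inl (h1 ▸ Sym2.mem_mk_left _ _))
          · by_cases h2 : z = h z0
            · exact saturates_insert.mpr (Or.inl (h2 ▸ Sym2.mem_mk_right _ _))
            · exact saturates_insert.mpr (Or.inr (hsat'' z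
                (Finset.mem_erase.mpr ⟨h2, Finset.mem_erase.mpr ⟨h1, hz⟩⟩)))
        · intro x hx
          rcases saturates_insert.mp hx with hxe | hxN
          · rcases Sym2.mem_iff.mp hxe with h1 | h1
            · exact Or.inl (h1 ▸ hz0Z)
            · exact Or.inr ⟨z0, hz0Z, h1.symm⟩
          · rcases hvert'' x hxN with hmem | ⟨z, hz, hzeq⟩
            · exact Or.inl (hsub'' hmem)
            · exact Or.inr ⟨z, hsub'' hz, hzeq⟩
      · -- h z0 outside Z
        set Z' := Z.erase z0 with hZ'
        have hsub' : Z' ⊆ Z := Finset.erase_subset _ _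
        have hcard' : Z'.card ≤ n := by
          have h1 : Z'.card = Z.card - 1 := Finset.card_erase_of_mem hz0Z
          omega
        obtain ⟨N', hN', hsat', hvert'⟩ := ih Z' hcard'
          (fun z hz => hadj z (hsub' hz))
          (fun z hz z' hz' => hinj z (hsub' hz) z' (hsub' hz'))
          (fun z hz z' hz' => hcls z (hsub' hz) z' (hsub' hz'))
        have hnz0 : ¬ Saturates N' z0 := by
          intro hs
          rcases hvert' z0 hs with hmem | ⟨z, hz, hzeq⟩
          · exact (Finset.mem_erase.mp hmem).1 rfl
          · exact hz0src z (hsub' hz) hzeq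
        have hnh : ¬ Saturates N' (h z0) := by
          intro hs
          rcases hvert' (h z0) hs with hmem | ⟨z, hz, hzeq⟩
          · exact hin (hsub' hmem)
          · have := hinj z (hsub' hz) z0 hz0Z hzeq
            exact (Finset.mem_erase.mp hz).1 this
        refine ⟨insert s(z0, h z0) N',
          hN'.insert (Ne.symm hz0adj.1) hz0adj.2 (by rw [hws]; exact hz0adj.2) hnz0 hnh,
          ?_, ?_⟩
        · intro z hz
          by_cases h1 : z = z0
          · exact saturates_insert.mpr (Or.inl (h1 ▸ Sym2.mem_mk_left _ _))
          · exact saturates_insert.mpr (Or.inr (hsat' z (Finset.mem_erase.mpr ⟨h1, hz⟩)))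
        · intro x hx
          rcases saturates_insert.mp hx with hxe | hxN
          · rcases Sym2.mem_iff.mp hxe with h1 | h1
            · exact Or.inl (h1 ▸ hz0Z)
            · exact Or.inr ⟨z0, hz0Z, h1.symm⟩
          · rcases hvert' x hxN with hmem | ⟨z, hz, hzeq⟩
            · exact Or.inl (hsub' hmem)
            · exact Or.inr ⟨z, hsub' hz, hzeq⟩
    · -- no source: h permutes Z
      push_neg at hsrc
      have himg : Z ⊆ Z.image h := by
        intro z0 hz0
        obtain ⟨z, hz, hzeq⟩ := hsrc z0 hz0
        exact hzeq ▸ Finset.mem_image_of_mem h hz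
      have heq : Z = Z.image h :=
        Finset.eq_of_subset_of_card_le himg Finset.card_image_le
      have hmem : ∀ z ∈ Z, h z ∈ Z := fun z hz => heq ▸ Finset.mem_image_of_mem h hz
      -- class of h z is opposite to class of z
      have hopp : ∀ z ∈ Z, c z → ¬ c (h z) := by
        intro z hz hcz hchz
        exact hcls z hz (h z) (hmem z hz) (Ne.symm (hadj z hz).1) (hadj z hz).2
          ⟨fun _ => hchz, fun _ => hcz⟩
      refine ⟨(Z.filter (fun z => c z)).image (fun z => s(z, h z)), ⟨?_, ?_, ?_⟩, ?_, ?_⟩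
      · intro e he
        obtain ⟨z, hz, rfl⟩ := Finset.mem_image.mp he
        have := (hadj z (Finset.mem_of_mem_filter z hz)).1
        simpa [Sym2.mk_isDiag_iff] using Ne.symm this
      · intro u v huv
        obtain ⟨z, hz, hze⟩ := Finset.mem_image.mp huv
        have hadjz := hadj z (Finset.mem_of_mem_filter z hz)
        rcases Sym2.eq_iff.mp hze.symm with ⟨h1, h2⟩ | ⟨h1, h2⟩
        · rw [h1, h2]; exact hadjz.2
        · rw [h1, h2, hws]; exact hadjz.2
      · intro e he f hf hef x hxe hxf
        obtain ⟨z1, hz1, rfl⟩ := Finset.mem_image.mp he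
        obtain ⟨z2, hz2, rfl⟩ := Finset.mem_image.mp hf
        have hz1Z := Finset.mem_of_mem_filter z1 hz1
        have hz2Z := Finset.mem_of_mem_filter z2 hz2
        have hc1 : c z1 := (Finset.mem_filter.mp hz1).2
        have hc2 : c z2 := (Finset.mem_filter.mp hz2).2
        have hne12 : z1 ≠ z2 := fun h12 => hef (by rw [h12])
        rcases Sym2.mem_iff.mp hxe with h1 | h1 <;> rcases Sym2.mem_iff.mp hxf with h2 | h2
        · exact hne12 (h1 ▸ h2 ▸ rfl)
        · -- z1 = h z2
          exact hopp z2 hz2Z hc2 ((h1 ▸ h2 : z1 = h z2) ▸ hc1)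
        · -- h z1 = z2
          exact hopp z1 hz1Z hc1 ((h1 ▸ h2 : h z1 = z2).symm ▸ hc2)
        · -- h z1 = h z2
          exact hne12 (hinj z1 hz1Z z2 hz2Z (h1 ▸ h2 : h z1 = h z2))
      · intro z hz
        by_cases hcz : c z
        · exact ⟨s(z, h z), Finset.mem_image_of_mem _ (Finset.mem_filter.mpr ⟨hz, hcz⟩),
            Sym2.mem_mk_left _ _⟩
        · obtain ⟨z', hz', hzeq⟩ := hsrc z hz
          have hne : z' ≠ z := by
            intro h'
            exact (hadj z hz).1 (h' ▸ hzeq)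
          have hwz : 1 ≤ w z' z := hzeq ▸ (hadj z' hz').2
          have hcz' : c z' := by
            by_contra hcz'
            exact hcls z' hz' z hz hne hwz ⟨fun h => absurd h hcz', fun h => absurd h hcz⟩
          exact ⟨s(z', h z'), Finset.mem_image_of_mem _ (Finset.mem_filter.mpr ⟨hz', hcz'⟩),
            hzeq ▸ Sym2.mem_mk_right _ _⟩
      · intro x hx
        obtain ⟨e, he, hxe⟩ := hx
        obtain ⟨z, hz, rfl⟩ := Finset.mem_image.mp he
        rcases Sym2.mem_iff.mp hxe with h1 | h1
        · exact Or.inl (h1 ▸ Finset.mem_of_mem_filter z hz)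
        · exact Or.inr ⟨z, Finset.mem_of_mem_filter z hz, h1.symm⟩

/-- A properly 2-coloured set of critical vertices can be saturated by one matching. -/
lemma saturate_critical_class {w : V → V → ℕ} (hws : ∀ a b, w a b = w b a)
    (hwl : ∀ v, w v v = 0) (hΔ : 1 ≤ maxDeg w) (Z : Finset V)
    (hcrit : ∀ z ∈ Z, deg w z = maxDeg w) (c : V → Prop)
    (hcls : ∀ z ∈ Z, ∀ z' ∈ Z, z ≠ z' → 1 ≤ w z z' → ¬(c z ↔ c z')) :
    ∃ N : Finset (Sym2 V), IsMatching w N ∧ ∀ z ∈ Z, Saturates N z := by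
  set t : {x // x ∈ Z} → Finset V :=
    fun z => Finset.univ.filter (fun y => y ≠ (z : V) ∧ 1 ≤ w (z : V) y) with ht
  have hall : ∀ s : Finset {x // x ∈ Z}, s.card ≤ (s.biUnion t).card := by
    intro s
    set B := s.biUnion t with hB
    have hdegeq : ∀ z ∈ s, deg w (z : V) = ∑ y ∈ B, w (z : V) y := by
      intro z hz
      refine (Finset.sum_subset (Finset.subset_univ B) ?_).symm
      intro y _ hyB
      have hyt : y ∉ t z := fun hy => hyB (Finset.mem_biUnion.mpr ⟨z, hz, hy⟩)
      rw [ht] at hyt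
      simp only [Finset.mem_filter, Finset.mem_univ, true_and, not_and, not_le] at hyt
      by_cases hyz : y = (z : V)
      · rw [hyz]; exact hwl _
      · have := hyt hyz; omega
    have hchain : s.card * maxDeg w ≤ B.card * maxDeg w := by
      calc s.card * maxDeg w = ∑ z ∈ s, maxDeg w := by
            rw [Finset.sum_const, smul_eq_mul]
        _ = ∑ z ∈ s, deg w (z : V) := by
            refine Finset.sum_congr rfl fun z hz => ?_
            exact (hcrit (z : V) z.2).symm
        _ = ∑ z ∈ s, ∑ y ∈ B, w (z : V) y := Finset.sum_congr rfl hdegeq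
        _ = ∑ y ∈ B, ∑ z ∈ s, w (z : V) y := Finset.sum_comm
        _ = ∑ y ∈ B, ∑ z ∈ s, w y (z : V) := by
            refine Finset.sum_congr rfl fun y _ => Finset.sum_congr rfl fun z _ => hws _ _
        _ ≤ ∑ y ∈ B, deg w y := by
            refine Finset.sum_le_sum fun y _ => ?_
            have : ∑ z ∈ s, w y (z : V) = ∑ u ∈ s.image Subtype.val, w y u := by
              rw [Finset.sum_image (fun a _ b _ hab => Subtype.ext hab)]
            rw [this]
            exact Finset.sum_le_sum_of_subset (Finset.subset_univ _)
        _ ≤ ∑ y ∈ B, maxDeg w := by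
            refine Finset.sum_le_sum fun y _ => Finset.le_sup (Finset.mem_univ y)
        _ = B.card * maxDeg w := by rw [Finset.sum_const, smul_eq_mul]
    exact Nat.le_of_mul_le_mul_right hchain hΔ
  obtain ⟨f, hfinj, hft⟩ := (Finset.all_card_le_biUnion_card_iff_exists_injective t).mp hall
  classical
  set h : V → V := fun x => if hx : x ∈ Z then f ⟨x, hx⟩ else x with hh
  have hhz : ∀ z (hz : z ∈ Z), h z = f ⟨z, hz⟩ := by
    intro z hz; simp [hh, dif_pos hz]
  have hadj : ∀ z ∈ Z, h z ≠ z ∧ 1 ≤ w z (h z) := by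
    intro z hz
    have := hft ⟨z, hz⟩
    rw [ht] at this
    simp only [Finset.mem_filter, Finset.mem_univ, true_and] at this
    rw [hhz z hz]
    exact this
  have hinj : ∀ z ∈ Z, ∀ z' ∈ Z, h z = h z' → z = z' := by
    intro z hz z' hz' heq
    rw [hhz z hz, hhz z' hz'] at heq
    have := hfinj heq
    exact Subtype.ext_iff.mp this
  obtain ⟨N, hN, hsat, _⟩ :=
    construct_saturating hws c h Z.card Z le_rfl hadj hinj hcls
  exact ⟨N, hN, hsat⟩

end HallExistence
section RunAnalysis

set_option linter.unusedSectionVars false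
set_option linter.unusedVariables false

variable {V : Type} [Fintype V] [DecidableEq V] {w0 : V → V → ℕ}

lemma deg_le_maxDeg (w : V → V → ℕ) (v : V) : deg w v ≤ maxDeg w :=
  Finset.le_sup (Finset.mem_univ v)

lemma w_le_deg (w : V → V → ℕ) (u v : V) : w u v ≤ deg w u :=
  Finset.single_le_sum (fun x _ => Nat.zero_le _) (Finset.mem_univ v)

lemma Rfun_le_one (M : ℕ → Finset (Sym2 V)) (k : ℕ) (i : V) : Rfun M k i ≤ 1 := by
  unfold Rfun; split <;> omega

lemma Ufun_le_one (M : ℕ → Finset (Sym2 V)) (k : ℕ) (i : V) : Ufun M k i ≤ 1 := by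
  unfold Ufun Rfun
  split_ifs <;> simp

lemma nsb_ge_deg {w : V → V → ℕ} {u : V → ℕ} {i : V} (hu : u i ≤ 1) :
    deg w i ≤ nsbWeight w u i := by
  unfold nsbWeight
  split
  · have h1 : 1 ≤ 2 - u i := by omega
    calc deg w i = deg w i * 1 := (Nat.mul_one _).symm
      _ ≤ deg w i * (2 - u i) := Nat.mul_le_mul_left _ h1
  · exact le_rfl

lemma nsb_le_two_deg {w : V → V → ℕ} {u : V → ℕ} {i : V} :
    nsbWeight w u i ≤ 2 * deg w i := by
  unfold nsbWeight
  split
  · have h1 : 2 - u i ≤ 2 := by omega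
    calc deg w i * (2 - u i) ≤ deg w i * 2 := Nat.mul_le_mul_left _ h1
      _ = 2 * deg w i := Nat.mul_comm _ _
  · omega

lemma crit_heavy {w : V → V → ℕ} {i : V} (h : deg w i = maxDeg w) : Heavy w i := by
  unfold Heavy
  rw [h]
  exact Nat.mul_le_mul_right _ (by omega)

lemma nsb_crit_unserved {w : V → V → ℕ} {u : V → ℕ} {i : V}
    (hcrit : deg w i = maxDeg w) (hu : u i = 0) :
    nsbWeight w u i = 2 * maxDeg w := by
  unfold nsbWeight
  rw [if_pos (crit_heavy hcrit), hu, hcrit]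
  omega

lemma nsb_crit_served {w : V → V → ℕ} {u : V → ℕ} {i : V}
    (hcrit : deg w i = maxDeg w) (hu : u i = 1) :
    nsbWeight w u i = maxDeg w := by
  unfold nsbWeight
  rw [if_pos (crit_heavy hcrit), hu, hcrit]
  omega

variable (run : NSBRun w0)

lemma NSBRun.G_succ (k : ℕ) (u v : V) :
    run.G (k + 1) u v =
      if s(u, v) ∈ run.M k then run.G k u v - 1 else run.G k u v := by
  rw [run.step k]; rfl

lemma NSBRun.G_symm (hsymm : ∀ u v, w0 u v = w0 v u) :
    ∀ k u v, run.G k u v = run.G k v u := by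
  intro k
  induction k with
  | zero => rw [run.init]; exact hsymm
  | succ k ih =>
    intro u v
    rw [G_succ, G_succ, show s(u, v) = s(v, u) from Sym2.eq_swap, ih u v]

lemma NSBRun.G_loopless (hloop : ∀ v, w0 v v = 0) : ∀ k v, run.G k v v = 0 := by
  intro k
  induction k with
  | zero => rw [run.init]; exact hloop
  | succ k ih =>
    intro v
    rw [G_succ, ih v]
    split <;> rfl

lemma NSBRun.G_mono (k : ℕ) (u v : V) : run.G (k + 1) u v ≤ run.G k u v := by
  rw [G_succ]; split <;> omega

lemma NSBRun.deg_succ_sat {k : ℕ} {v : V} (hsat : Saturates (run.M k) v) :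
    deg (run.G (k + 1)) v + 1 = deg (run.G k) v := by
  obtain ⟨y, hy, hvy, huniq⟩ := (run.matching k).partner hsat
  have h1 : ∀ u, u ≠ y → run.G (k + 1) v u = run.G k v u := by
    intro u hu
    rw [G_succ, if_neg (fun hmem => hu (huniq u hmem))]
  have h2 : run.G (k + 1) v y = run.G k v y - 1 := by
    rw [G_succ, if_pos hvy]
  have h3 : 1 ≤ run.G k v y := (run.matching k).2.1 v y hvy
  unfold deg
  rw [← Finset.sum_erase_add _ _ (Finset.mem_univ y),
      ← Finset.sum_erase_add _ _ (Finset.mem_univ y)]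
  have hA : ∑ u ∈ Finset.univ.erase y, run.G (k + 1) v u =
      ∑ u ∈ Finset.univ.erase y, run.G k v u :=
    Finset.sum_congr rfl fun u hu => h1 u (Finset.mem_erase.mp hu).1
  rw [hA, h2]
  omega

lemma NSBRun.deg_succ_unsat {k : ℕ} {v : V} (hsat : ¬ Saturates (run.M k) v) :
    deg (run.G (k + 1)) v = deg (run.G k) v := by
  unfold deg
  refine Finset.sum_congr rfl fun u _ => ?_
  rw [G_succ, if_neg (fun hmem => hsat ⟨_, hmem, Sym2.mem_mk_left v u⟩)]

lemma NSBRun.deg_mono (k : ℕ) (v : V) : deg (run.G (k + 1)) v ≤ deg (run.G k) v := by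
  by_cases h : Saturates (run.M k) v
  · have := run.deg_succ_sat h; omega
  · rw [run.deg_succ_unsat h]

lemma NSBRun.maxDeg_mono (k : ℕ) : maxDeg (run.G (k + 1)) ≤ maxDeg (run.G k) :=
  Finset.sup_le fun v _ => le_trans (run.deg_mono k v) (deg_le_maxDeg _ v)

/-- Two unserved vertices cannot be adjacent (maximality of chosen matching). -/
lemma NSBRun.unsat_indep (k : ℕ) {u v : V} (hne : u ≠ v) (hw : 1 ≤ run.G k u v)
    (hws : ∀ a b, run.G k a b = run.G k b a)
    (hu : ¬ Saturates (run.M k) u) (hv : ¬ Saturates (run.M k) v) : False := by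
  set φ := nsbWeight (run.G k) (Ufun run.M k) with hφ
  have hM' : IsMatching (run.G k) (insert s(u, v) (run.M k)) :=
    (run.matching k).insert hne hw (by rwa [hws v u]) hu hv
  have hgain : matchWeight φ (run.M k) + φ u ≤ matchWeight φ (insert s(u, v) (run.M k)) :=
    matchWeight_gain hu (fun x hx => saturates_insert.mpr (Or.inr hx))
      (saturates_insert.mpr (Or.inl (Sym2.mem_mk_left u v)))
  have hopt := run.opt k _ hM'
  rw [← hφ] at hopt
  have hpos : 1 ≤ φ u := by
    calc 1 ≤ run.G k u v := hw
      _ ≤ deg (run.G k) u := w_le_deg _ u v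
      _ ≤ φ u := nsb_ge_deg (Ufun_le_one _ _ _)
  omega

/-- Any vertex saturated by some matching and strictly dominating all
unsaturated-in-`N` vertices in NSB weight is served by the chosen matching. -/
lemma NSBRun.opt_saturates (k : ℕ) {N : Finset (Sym2 V)} (hN : IsMatching (run.G k) N)
    {v : V} (hvN : Saturates N v)
    (hpos : 0 < nsbWeight (run.G k) (Ufun run.M k) v)
    (hdom : ∀ x, ¬ Saturates N x →
      nsbWeight (run.G k) (Ufun run.M k) x < nsbWeight (run.G k) (Ufun run.M k) v) :
    Saturates (run.M k) v := by
  set φ := nsbWeight (run.G k) (Ufun run.M k) with hφ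
  by_contra hvM
  obtain ⟨M', hM', hcases⟩ := exchange (N \ run.M k).card (run.M k) N
    (run.matching k) hN le_rfl v hvN hvM
  have hopt := run.opt k M' hM'
  rw [← hφ] at hopt
  rcases hcases with ⟨hmono, hv'⟩ | ⟨x0, hx0M, hx0N, hmono, hv'⟩
  · have := matchWeight_gain (φ := φ) hvM hmono hv'
    omega
  · have hvx0 : v ≠ x0 := fun h => hvM (h ▸ hx0M)
    have := matchWeight_swap (φ := φ) hvx0 hvM hmono hv'
    have hlt := hdom x0 hx0N
    omega

/-- Service lemma for slots not ≡ 2 (mod 3): every critical vertex unserved in the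
previous slot is served. -/
lemma NSBRun.serve1 (hsymm : ∀ u v, w0 u v = w0 v u) (hloop : ∀ v, w0 v v = 0)
    (k : ℕ) (h3 : (k + 1) % 3 ≠ 2) (hΔ : 1 ≤ maxDeg (run.G (k + 1))) {v : V}
    (hcrit : deg (run.G (k + 1)) v = maxDeg (run.G (k + 1)))
    (hunsat : ¬ Saturates (run.M k) v) : Saturates (run.M (k + 1)) v := by
  classical
  set w := run.G (k + 1) with hw
  set Δ := maxDeg w with hΔdef
  set Z := Finset.univ.filter
    (fun z => deg w z = Δ ∧ ¬ Saturates (run.M k) z) with hZ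
  obtain ⟨N, hN, hsat⟩ := saturate_critical_class (w := w)
    (run.G_symm hsymm (k + 1)) (run.G_loopless hloop (k + 1)) hΔ Z
    (fun z hz => (Finset.mem_filter.mp hz).2.1) (fun _ => True)
    (by
      intro z hz z' hz' hne hwzz _
      have hz1 := (Finset.mem_filter.mp hz).2.2
      have hz2 := (Finset.mem_filter.mp hz').2.2
      have hwk : 1 ≤ run.G k z z' := le_trans hwzz (run.G_mono k z z')
      exact run.unsat_indep k hne hwk (run.G_symm hsymm k) hz1 hz2)
  have hvZ : v ∈ Z := Finset.mem_filter.mpr ⟨Finset.mem_univ v, hcrit, hunsat⟩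
  have hU : Ufun run.M (k + 1) v = 0 := by
    unfold Ufun
    rw [if_neg (Nat.succ_ne_zero k), if_neg h3]
    unfold Rfun
    rw [Nat.add_sub_cancel, if_neg hunsat]
  have hφv : nsbWeight w (Ufun run.M (k + 1)) v = 2 * Δ := nsb_crit_unserved hcrit hU
  refine run.opt_saturates (k + 1) hN (hsat v hvZ) (by rw [hφv]; omega) ?_
  intro x hxN
  rw [← hw, hφv]
  have hxZ : x ∉ Z := fun hx => hxN (hsat x hx)
  rw [hZ] at hxZ
  simp only [Finset.mem_filter, Finset.mem_univ, true_and, not_and, not_not] at hxZ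
  by_cases hxcrit : deg w x = Δ
  · -- x critical but served at k
    have hxsat := hxZ hxcrit
    have hUx : Ufun run.M (k + 1) x = 1 := by
      unfold Ufun
      rw [if_neg (Nat.succ_ne_zero k), if_neg h3]
      unfold Rfun
      rw [Nat.add_sub_cancel, if_pos hxsat]
    rw [nsb_crit_served hxcrit hUx]
    omega
  · -- x not critical
    have hxle : deg w x ≤ Δ := deg_le_maxDeg _ _
    have hxlt : deg w x + 1 ≤ Δ := by omega
    have := nsb_le_two_deg (w := w) (u := Ufun run.M (k + 1)) (i := x)
    omega

/-- Service lemma for slots ≡ 2 (mod 3): every critical vertex unserved in one of the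
two previous slots is served. -/
lemma NSBRun.serve2 (hsymm : ∀ u v, w0 u v = w0 v u) (hloop : ∀ v, w0 v v = 0)
    (k : ℕ) (h3 : (k + 2) % 3 = 2) (hΔ : 1 ≤ maxDeg (run.G (k + 2))) {v : V}
    (hcrit : deg (run.G (k + 2)) v = maxDeg (run.G (k + 2)))
    (hunsat : ¬ Saturates (run.M (k + 1)) v ∨ ¬ Saturates (run.M k) v) :
    Saturates (run.M (k + 2)) v := by
  classical
  set w := run.G (k + 2) with hw
  set Δ := maxDeg w with hΔdef
  set Z := Finset.univ.filter
    (fun z => deg w z = Δ ∧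
      (¬ Saturates (run.M (k + 1)) z ∨ ¬ Saturates (run.M k) z)) with hZ
  have hmono2 : ∀ a b : V, run.G (k + 2) a b ≤ run.G k a b := fun a b =>
    le_trans (run.G_mono (k + 1) a b) (run.G_mono k a b)
  obtain ⟨N, hN, hsat⟩ := saturate_critical_class (w := w)
    (run.G_symm hsymm (k + 2)) (run.G_loopless hloop (k + 2)) hΔ Z
    (fun z hz => (Finset.mem_filter.mp hz).2.1)
    (fun z => ¬ Saturates (run.M (k + 1)) z)
    (by
      intro z hz z' hz' hne hwzz hiff
      have hz1 := (Finset.mem_filter.mp hz).2.2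
      have hz2 := (Finset.mem_filter.mp hz').2.2
      by_cases hc : Saturates (run.M (k + 1)) z
      · -- both served at k+1, so both unserved at k
        have hc' : Saturates (run.M (k + 1)) z' := by
          by_contra h
          exact (hiff.mpr h) hc
        have hu1 : ¬ Saturates (run.M k) z := hz1.resolve_left (fun h => h hc)
        have hu2 : ¬ Saturates (run.M k) z' := hz2.resolve_left (fun h => h hc')
        exact run.unsat_indep k hne (le_trans hwzz (hmono2 z z'))
          (run.G_symm hsymm k) hu1 hu2
      · -- both unserved at k+1
        have hc' : ¬ Saturates (run.M (k + 1)) z' := hiff.mp hc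
        exact run.unsat_indep (k + 1) hne (le_trans hwzz (run.G_mono (k + 1) z z'))
          (run.G_symm hsymm (k + 1)) hc hc')
  have hvZ : v ∈ Z := Finset.mem_filter.mpr ⟨Finset.mem_univ v, hcrit, hunsat⟩
  have harith1 : k + 2 - 1 = k + 1 := by omega
  have harith2 : k + 2 - 2 = k := by omega
  have hU : Ufun run.M (k + 2) v = 0 := by
    unfold Ufun
    rw [if_neg (Nat.succ_ne_zero (k + 1)), if_pos h3, harith1, harith2]
    unfold Rfun
    rcases hunsat with h | h
    · rw [if_neg h]; omega
    · rw [if_neg h]; omega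
  have hφv : nsbWeight w (Ufun run.M (k + 2)) v = 2 * Δ := nsb_crit_unserved hcrit hU
  refine run.opt_saturates (k + 2) hN (hsat v hvZ) (by rw [hφv]; omega) ?_
  intro x hxN
  rw [← hw, hφv]
  have hxZ : x ∉ Z := fun hx => hxN (hsat x hx)
  rw [hZ] at hxZ
  simp only [Finset.mem_filter, Finset.mem_univ, true_and, not_and, not_or, not_not] at hxZ
  by_cases hxcrit : deg w x = Δ
  · obtain ⟨hs1, hs2⟩ := hxZ hxcrit
    have hUx : Ufun run.M (k + 2) x = 1 := by
      unfold Ufun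
      rw [if_neg (Nat.succ_ne_zero (k + 1)), if_pos h3, harith1, harith2]
      unfold Rfun
      rw [if_pos hs1, if_pos hs2]
    rw [nsb_crit_served hxcrit hUx]
    omega
  · have hxle : deg w x ≤ Δ := deg_le_maxDeg _ _
    have hxlt : deg w x + 1 ≤ Δ := by omega
    have := nsb_le_two_deg (w := w) (u := Ufun run.M (k + 2)) (i := x)
    omega

end RunAnalysis
section MainArgument

set_option linter.unusedSectionVars false
set_option linter.unusedVariables false

variable {V : Type} [Fintype V] [DecidableEq V] {w0 : V → V → ℕ} (run : NSBRun w0)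

lemma NSBRun.drop1 (hsymm : ∀ u v, w0 u v = w0 v u) (hloop : ∀ v, w0 v v = 0)
    (k : ℕ) (h3 : (k + 1) % 3 ≠ 2) (hΔ : 1 ≤ maxDeg (run.G k)) :
    maxDeg (run.G (k + 2)) + 1 ≤ maxDeg (run.G k) := by
  set D := maxDeg (run.G k) with hD
  have hx : ∀ x, deg (run.G (k + 2)) x + 1 ≤ D := by
    intro x
    by_contra hcon
    push_neg at hcon
    have h0 : deg (run.G k) x ≤ D := deg_le_maxDeg _ _
    have h1 := run.deg_mono k x
    have h2 : deg (run.G (k + 2)) x ≤ deg (run.G (k + 1)) x := run.deg_mono (k + 1) x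
    have hunsat0 : ¬ Saturates (run.M k) x := by
      intro hs
      have := run.deg_succ_sat hs
      omega
    have hle1 := run.maxDeg_mono k
    have hge1 := deg_le_maxDeg (run.G (k + 1)) x
    have hcrit1 : deg (run.G (k + 1)) x = maxDeg (run.G (k + 1)) := by omega
    have hΔ1 : 1 ≤ maxDeg (run.G (k + 1)) := by omega
    have hserved := run.serve1 hsymm hloop k h3 hΔ1 hcrit1 hunsat0
    have hfin : deg (run.G (k + 2)) x + 1 = deg (run.G (k + 1)) x :=
      run.deg_succ_sat hserved
    omega
  have hsup : maxDeg (run.G (k + 2)) ≤ D - 1 :=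
    Finset.sup_le fun x _ => by have := hx x; omega
  omega

lemma NSBRun.blk (hsymm : ∀ u v, w0 u v = w0 v u) (hloop : ∀ v, w0 v v = 0)
    (k : ℕ) (h30 : k % 3 = 0) (hD : 2 ≤ maxDeg (run.G k)) :
    maxDeg (run.G (k + 3)) + 2 ≤ maxDeg (run.G k) := by
  set D := maxDeg (run.G k) with hDdef
  have h31 : (k + 1) % 3 ≠ 2 := by omega
  have h32 : (k + 2) % 3 = 2 := by omega
  have hdrop := run.drop1 hsymm hloop k h31 (by omega)
  have hx : ∀ x, deg (run.G (k + 3)) x + 2 ≤ D := by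
    intro x
    by_contra hcon
    push_neg at hcon
    have h0 : deg (run.G k) x ≤ D := deg_le_maxDeg _ _
    have h1 := run.deg_mono k x
    have h2 : deg (run.G (k + 2)) x ≤ deg (run.G (k + 1)) x := run.deg_mono (k + 1) x
    have h3' : deg (run.G (k + 3)) x ≤ deg (run.G (k + 2)) x := run.deg_mono (k + 2) x
    have hd2le : deg (run.G (k + 2)) x ≤ maxDeg (run.G (k + 2)) := deg_le_maxDeg _ _
    have hunsat2 : ¬ Saturates (run.M (k + 2)) x := by
      intro hs
      have hss : deg (run.G (k + 3)) x + 1 = deg (run.G (k + 2)) x := run.deg_succ_sat hs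
      omega
    have hcrit2 : deg (run.G (k + 2)) x = maxDeg (run.G (k + 2)) := by omega
    have hΔ2 : 1 ≤ maxDeg (run.G (k + 2)) := by omega
    have hnotboth : ¬ Saturates (run.M (k + 1)) x ∨ ¬ Saturates (run.M k) x := by
      by_contra hb
      push_neg at hb
      have e1 : deg (run.G (k + 2)) x + 1 = deg (run.G (k + 1)) x := run.deg_succ_sat hb.1
      have e2 : deg (run.G (k + 1)) x + 1 = deg (run.G k) x := run.deg_succ_sat hb.2
      omega
    exact hunsat2 (run.serve2 hsymm hloop k h32 hΔ2 hcrit2 hnotboth)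
  have hsup : maxDeg (run.G (k + 3)) ≤ D - 2 :=
    Finset.sup_le fun x _ => by have := hx x; omega
  omega

lemma NSBRun.evac0 (k : ℕ) (hΔ : maxDeg (run.G k) = 0) : ∀ u v, run.G k u v = 0 := by
  intro u v
  have h1 := w_le_deg (run.G k) u v
  have h2 := deg_le_maxDeg (run.G k) u
  omega

lemma NSBRun.evac1 (hsymm : ∀ u v, w0 u v = w0 v u) (hloop : ∀ v, w0 v v = 0)
    (k : ℕ) (hΔ : maxDeg (run.G k) ≤ 1) : ∀ u v, run.G (k + 1) u v = 0 := by
  intro u v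
  by_contra h
  have h1 : 1 ≤ run.G (k + 1) u v := by omega
  have h0 : 1 ≤ run.G k u v := le_trans h1 (run.G_mono k u v)
  have hne : u ≠ v := by
    rintro rfl
    rw [run.G_loopless hloop k] at h0
    omega
  have key : ∀ a b : V, a ≠ b → 1 ≤ run.G k a b → 1 ≤ run.G (k + 1) a b →
      ¬ Saturates (run.M k) a := by
    intro a b hab h0' h1' hs
    obtain ⟨y, hya, hay, _⟩ := (run.matching k).partner hs
    by_cases hyb : y = b
    · have hle : run.G k a b ≤ 1 :=
        le_trans (w_le_deg _ a b) (le_trans (deg_le_maxDeg _ a) hΔ)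
      have heq : run.G (k + 1) a b = run.G k a b - 1 := by
        rw [run.G_succ, if_pos (hyb ▸ hay)]
      omega
    · have hw1 : 1 ≤ run.G k a y := (run.matching k).2.1 a y hay
      have hsum : run.G k a y + run.G k a b ≤ deg (run.G k) a := by
        have hs2 := Finset.sum_le_sum_of_subset
          (f := fun t => run.G k a t) (Finset.subset_univ ({y, b} : Finset V))
        rwa [Finset.sum_pair hyb] at hs2
      have hda : deg (run.G k) a ≤ 1 := le_trans (deg_le_maxDeg _ a) hΔ
      omega
  have hu := key u v hne h0 h1
  have h0v : 1 ≤ run.G k v u := by rw [run.G_symm hsymm k v u]; exact h0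
  have h1v : 1 ≤ run.G (k + 1) v u := by rw [run.G_symm hsymm (k + 1) v u]; exact h1
  have hv := key v u (Ne.symm hne) h0v h1v
  exact run.unsat_indep k hne h0 (run.G_symm hsymm k) hu hv

lemma NSBRun.zero_succ (k : ℕ) (hz : ∀ u v, run.G k u v = 0) :
    ∀ u v, run.G (k + 1) u v = 0 := by
  intro u v
  have := run.G_mono k u v
  have := hz u v
  omega

lemma NSBRun.main (hsymm : ∀ u v, w0 u v = w0 v u) (hloop : ∀ v, w0 v v = 0) :
    ∀ j, 2 * j ≤ maxDeg w0 →
      (maxDeg (run.G (3 * j)) + 2 * j ≤ maxDeg w0 ∨ ∀ u v, run.G (3 * j) u v = 0) := by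
  intro j
  induction j with
  | zero =>
    intro _
    left
    simp [run.init]
  | succ j ih =>
    intro hj
    have hj' : 2 * j ≤ maxDeg w0 := by omega
    have h3eq : 3 * (j + 1) = 3 * j + 1 + 1 + 1 := by ring
    rcases ih hj' with hle | hzero
    · by_cases hD : 2 ≤ maxDeg (run.G (3 * j))
      · left
        have hblk := run.blk hsymm hloop (3 * j) (by omega) hD
        have h3eq' : 3 * (j + 1) = 3 * j + 3 := by ring
        rw [h3eq']
        omega
      · right
        have h1 := run.evac1 hsymm hloop (3 * j) (by omega)
        have h2 := run.zero_succ (3 * j + 1) h1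
        have h3 := run.zero_succ (3 * j + 1 + 1) h2
        rw [h3eq]
        exact h3
    · right
      have h1 := run.zero_succ _ hzero
      have h2 := run.zero_succ _ h1
      have h3 := run.zero_succ _ h2
      rw [h3eq]
      exact h3

lemma NSBRun.terminates (hsymm : ∀ u v, w0 u v = w0 v u) (hloop : ∀ v, w0 v v = 0) :
    ∃ K, (∀ u v, run.G K u v = 0) ∧ 2 * K ≤ 3 * maxDeg w0 := by
  set D := maxDeg w0 with hD
  by_cases hpar : D % 2 = 0
  · refine ⟨3 * (D / 2), ?_, by omega⟩
    rcases run.main hsymm hloop (D / 2) (by omega) with h | h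
    · exact run.evac0 _ (by omega)
    · exact h
  · refine ⟨3 * (D / 2) + 1, ?_, by omega⟩
    rcases run.main hsymm hloop (D / 2) (by omega) with h | h
    · exact run.evac1 hsymm hloop _ (by omega)
    · exact run.zero_succ _ h

lemma canEvacuate_maxDeg_le {w : V → V → ℕ} {T : ℕ} (h : CanEvacuate w T) :
    maxDeg w ≤ T := by
  obtain ⟨Ms, hmatch, hcount⟩ := h
  refine Finset.sup_le fun v _ => ?_
  classical
  have hdisj : ∀ u1 ∈ (Finset.univ : Finset V), ∀ u2 ∈ (Finset.univ : Finset V), u1 ≠ u2 →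
      Disjoint (Finset.univ.filter (fun j => s(v, u1) ∈ Ms j))
        (Finset.univ.filter (fun j => s(v, u2) ∈ Ms j)) := by
    intro u1 _ u2 _ hne
    rw [Finset.disjoint_left]
    intro j hj1 hj2
    have h1 := (Finset.mem_filter.mp hj1).2
    have h2 := (Finset.mem_filter.mp hj2).2
    have := (hmatch j).eq_of_shared h1 h2 (Sym2.mem_mk_left v u1) (Sym2.mem_mk_left v u2)
    exact hne (Sym2.congr_right.mp this)
  calc deg w v = ∑ u, (Finset.univ.filter (fun j => s(v, u) ∈ Ms j)).card :=
        Finset.sum_congr rfl fun u _ => (hcount v u).symm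
    _ = (Finset.univ.biUnion (fun u => Finset.univ.filter (fun j => s(v, u) ∈ Ms j))).card :=
        (Finset.card_biUnion hdisj).symm
    _ ≤ (Finset.univ : Finset (Fin T)).card := Finset.card_le_univ _
    _ = T := Finset.card_fin T

end MainArgument
/-- Every NSB evacuation run on a loopless multigraph on `n ≥ 2` vertices
terminates, its evacuation time `T` (the least slot at which the graph is edgeless)
satisfies `2·T ≤ 3·X′` where `X′` is the minimum evacuation time of `G(0)`. -/
theorem nsb_evacuation_time_ratio {V : Type} [Fintype V] [DecidableEq V]
    (w0 : V → V → ℕ) (hsymm : ∀ u v, w0 u v = w0 v u) (hloop : ∀ v, w0 v v = 0)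
    (hn : 2 ≤ Fintype.card V)
    (run : NSBRun w0)
    (X' : ℕ) (hX' : IsLeast {T' | CanEvacuate w0 T'} X') :
    ∃ T : ℕ, IsLeast {k | ∀ u v : V, run.G k u v = 0} T ∧ 2 * T ≤ 3 * X' := by
  obtain ⟨K, hK0, hKb⟩ := run.terminates hsymm hloop
  have hex : ∃ k, ∀ u v : V, run.G k u v = 0 := ⟨K, hK0⟩
  refine ⟨Nat.find hex, ⟨Nat.find_spec hex, fun k hk => Nat.find_min' hex hk⟩, ?_⟩
  have hTK : Nat.find hex ≤ K := Nat.find_min' hex hK0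
  have hDX : maxDeg w0 ≤ X' := canEvacuate_maxDeg_le hX'.1
  omega

end NSBPaper
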